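/- Let n ≥ 1, let f : ℝⁿ → ℝ be continuously differentiable, let r > 0, and let M > 0 satisfy ‖∇f(x)‖ ≤ M for all x in the closed ball B(0, r). Set T := r/(4Mn). Then for every α ∈ (0, T/2], every k̄ ∈ ℕ, and every cyclic coordinate descent trajectory of f with step size α whose inner iterates are (x_{k,i}) and which satisfies x_{k̄} ∈ B(0, r/2), one has x_{k,i} ∈ B(0, r) for all k ∈ {k̄, …, k̄ + ⌊T/α⌋} and all i ∈ {0, …, n}. (Intermediate claim established in the proof of the paper's Proposition 4.2.) -/
import Mathlib

/-- A cyclic coordinate descent trajectory of `f` with step size `α`, with explicit inner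
iterates `z k i` (`= x_{k,i}` in the paper): `z k 0 = x k`,
`z k i = z k (i-1) - α ∇_{σᵏ i} f (z k (i-1))` for some permutation `σᵏ`, and
`x (k+1) = z k n`, where `∇_i f x = (∂f/∂x_i)(x) • e_i`. -/
def IsCCDTrajInner {n : ℕ} (f : EuclideanSpace ℝ (Fin n) → ℝ) (α : ℝ)
    (x : ℕ → EuclideanSpace ℝ (Fin n)) (z : ℕ → Fin (n + 1) → EuclideanSpace ℝ (Fin n)) :
    Prop :=
  ∀ k : ℕ, z k 0 = x k ∧
    (∃ σ : Equiv.Perm (Fin n), ∀ i : Fin n, z k i.succ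
      = z k i.castSucc - α • EuclideanSpace.single (σ i) (gradient f (z k i.castSucc) (σ i))) ∧
    x (k + 1) = z k (Fin.last n)


lemma euclid_comp_le_norm {n : ℕ} (v : EuclideanSpace ℝ (Fin n)) (j : Fin n) :
    ‖v j‖ ≤ ‖v‖ := by
  rw [EuclideanSpace.norm_eq]
  calc ‖v j‖ = Real.sqrt (‖v j‖ ^ 2) := (Real.sqrt_sq (norm_nonneg _)).symm
    _ ≤ _ := Real.sqrt_le_sqrt
        (Finset.single_le_sum (fun i _ => sq_nonneg ‖v i‖) (Finset.mem_univ j))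
theorem stmt_12 {n : ℕ} (hn : 1 ≤ n) (f : EuclideanSpace ℝ (Fin n) → ℝ)
    (hf : ContDiff ℝ 1 f) (r M : ℝ) (hr : 0 < r) (hM : 0 < M)
    (hgrad : ∀ x ∈ Metric.closedBall (0 : EuclideanSpace ℝ (Fin n)) r, ‖gradient f x‖ ≤ M)
    (T : ℝ) (hT : T = r / (4 * M * n)) :
    ∀ α : ℝ, 0 < α → α ≤ T / 2 → ∀ kbar : ℕ,
      ∀ (x : ℕ → EuclideanSpace ℝ (Fin n)) (z : ℕ → Fin (n + 1) → EuclideanSpace ℝ (Fin n)),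
        IsCCDTrajInner f α x z →
        x kbar ∈ Metric.closedBall (0 : EuclideanSpace ℝ (Fin n)) (r / 2) →
        ∀ k : ℕ, kbar ≤ k → k ≤ kbar + ⌊T / α⌋₊ →
          ∀ i : Fin (n + 1), z k i ∈ Metric.closedBall (0 : EuclideanSpace ℝ (Fin n)) r := by

  intro α hα hαT kbar x z htraj hx0 k hk1 hk2 i
  set K := ⌊T / α⌋₊ with hK
  have hn' : (0:ℝ) < n := by exact_mod_cast lt_of_lt_of_le one_pos (by exact_mod_cast hn)
  have hTpos : 0 < T := by
    rw [hT]; positivity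
  -- Kα ≤ T
  have hKα : (K:ℝ) * α ≤ T := by
    have : (K:ℝ) ≤ T / α := Nat.floor_le (by positivity)
    calc (K:ℝ) * α ≤ (T/α) * α := by nlinarith
      _ = T := by field_simp
  -- key numeric bound
  have hbig : ((K+1) * n : ℕ) * (α * M) ≤ r / 2 := by
    push_cast
    have h1 : ((K:ℝ)+1) * α ≤ 3/2 * T := by nlinarith
    have h2 : ((K:ℝ)+1) * α * ((n:ℝ)*M) ≤ 3/2 * T * ((n:ℝ)*M) :=
      mul_le_mul_of_nonneg_right h1 (by positivity)
    calc ((K:ℝ)+1) * (n:ℝ) * (α * M) = ((K:ℝ)+1) * α * ((n:ℝ)*M) := by ring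
      _ ≤ 3/2 * T * ((n:ℝ)*M) := h2
      _ = 3/8 * r := by rw [hT]; field_simp; ring
      _ ≤ r/2 := by linarith
  have hαM : 0 ≤ α * M := by positivity
  -- from norm bound with step count s ≤ (K+1)n, get membership in ball
  have inball : ∀ (s : ℕ) (v : EuclideanSpace ℝ (Fin n)),
      s ≤ (K+1)*n → ‖v‖ ≤ r/2 + s * (α*M) →
      v ∈ Metric.closedBall (0 : EuclideanSpace ℝ (Fin n)) r := by
    intro s v hs hv
    rw [Metric.mem_closedBall, dist_zero_right]
    have : (s:ℝ) * (α*M) ≤ ((K+1)*n : ℕ) * (α*M) := by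
      apply mul_le_mul_of_nonneg_right _ hαM
      exact_mod_cast hs
    linarith
  -- inner-step propagation
  have step : ∀ (k : ℕ) (s0 : ℕ), s0 + n ≤ (K+1)*n →
      ‖z k 0‖ ≤ r/2 + s0 * (α*M) →
      ∀ i : Fin (n+1), ‖z k i‖ ≤ r/2 + (s0 + (i:ℕ)) * (α*M) := by
    intro k s0 hs0 h0 i
    induction i using Fin.induction with
    | zero => simpa using h0
    | succ j ih =>
      simp only [Fin.coe_castSucc] at ih
      obtain ⟨-, ⟨σ, hσ⟩, -⟩ := htraj k
      have hjc : ((j.castSucc : Fin (n+1)) : ℕ) = (j : ℕ) := rfl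
      have hprev : z k j.castSucc ∈ Metric.closedBall (0 : EuclideanSpace ℝ (Fin n)) r := by
        apply inball (s0 + (j:ℕ)) _ _ (by push_cast; push_cast at ih; linarith)
        have := j.isLt
        omega
      have hg : ‖gradient f (z k j.castSucc)‖ ≤ M := hgrad _ hprev
      have hcomp : ‖gradient f (z k j.castSucc) (σ j)‖ ≤ M :=
        le_trans (euclid_comp_le_norm _ _) hg
      have hnormstep : ‖z k j.succ - z k j.castSucc‖ ≤ α * M := by
        rw [hσ j]
        simp only [sub_sub_cancel_left, norm_neg, norm_smul, Real.norm_eq_abs,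
          abs_of_pos hα, EuclideanSpace.norm_single]
        exact mul_le_mul_of_nonneg_left hcomp (le_of_lt hα)
      have : ‖z k j.succ‖ ≤ ‖z k j.castSucc‖ + α * M := by
        calc ‖z k j.succ‖ = ‖z k j.castSucc + (z k j.succ - z k j.castSucc)‖ := by congr 1; abel
          _ ≤ ‖z k j.castSucc‖ + ‖z k j.succ - z k j.castSucc‖ := norm_add_le _ _
          _ ≤ _ := by linarith
      have hcoe : ((j.succ : Fin (n+1)) : ℕ) = (j : ℕ) + 1 := rfl
      rw [hcoe]
      push_cast
      push_cast at ih
      nlinarith [hαM]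
  -- outer induction: bound on ‖z k 0‖
  have outer : ∀ k, kbar ≤ k → k ≤ kbar + K →
      ‖z k 0‖ ≤ r/2 + ((k - kbar) * n : ℕ) * (α*M) := by
    intro k hk
    induction k, hk using Nat.le_induction with
    | base =>
      intro _
      obtain ⟨h0, -, -⟩ := htraj kbar
      rw [h0]
      simp only [Nat.sub_self, Nat.zero_mul, Nat.cast_zero, zero_mul, add_zero]
      rw [Metric.mem_closedBall, dist_zero_right] at hx0
      exact hx0
    | succ m hm ih =>
      intro hmK
      have ih' := ih (by omega)
      have hlast := step m ((m - kbar) * n) (by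
        have : m - kbar + 1 ≤ K + 1 := by omega
        calc (m - kbar) * n + n = (m - kbar + 1) * n := by ring
          _ ≤ (K+1)*n := Nat.mul_le_mul_right n this) ih' (Fin.last n)
      obtain ⟨h0, -, hlastEq⟩ := htraj m
      obtain ⟨h0', -, -⟩ := htraj (m+1)
      rw [h0', hlastEq]
      have hlc : ((Fin.last n : Fin (n+1)) : ℕ) = n := rfl
      rw [hlc] at hlast
      have : (m - kbar) * n + n = (m + 1 - kbar) * n := by
        have : m + 1 - kbar = (m - kbar) + 1 := by omega
        rw [this]; ring
      rw [← this]
      push_cast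
      push_cast at hlast
      linarith
  -- conclude
  have h0 := outer k hk1 hk2
  have hfin := step k ((k - kbar) * n) (by
    have : k - kbar + 1 ≤ K + 1 := by omega
    calc (k - kbar) * n + n = (k - kbar + 1) * n := by ring
      _ ≤ (K+1)*n := Nat.mul_le_mul_right n this) h0 i
  refine inball ((k - kbar) * n + (i:ℕ)) _ ?_ (by push_cast; push_cast at hfin; linarith)
  have : (i : ℕ) ≤ n := Nat.lt_succ_iff.mp i.isLt
  have : k - kbar + 1 ≤ K + 1 := by omega
  calc (k - kbar) * n + (i:ℕ) ≤ (k - kbar) * n + n := by omega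
    _ = (k - kbar + 1) * n := by ring
    _ ≤ (K+1)*n := Nat.mul_le_mul_right n this
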